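/- For any nonnegative functions φ, ψ ∈ L¹(Ω), the Kullback–Leibler divergence controls the L¹ distance: ‖φ − ψ‖²_{L¹(Ω)} ≤ ( (2/3)‖φ‖_{L¹(Ω)} + (4/3)‖ψ‖_{L¹(Ω)} ) · D_KL(φ,ψ). -/

import Mathlib

open MeasureTheory Real

/-- The Kullback–Leibler functional `D_KL(φ,ψ) = ∫ (φ log(φ/ψ) − φ + ψ) dμ`. -/
noncomputable def KLdiv {X : Type*} [MeasurableSpace X] (μ : Measure X) (φ ψ : X → ℝ) : ℝ :=
  ∫ x, (φ x * Real.log (φ x / ψ x) - φ x + ψ x) ∂μ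

/-- (A) for `1 ≤ t`: cleared form `3(t²−1) ≤ (t²+4t+1)·log t`. -/
lemma logA {t : ℝ} (ht : 1 ≤ t) :
    3 * (t ^ 2 - 1) ≤ (t ^ 2 + 4 * t + 1) * Real.log t := by
  have hmono : MonotoneOn (fun x : ℝ => Real.log x - 3 * (x ^ 2 - 1) / (x ^ 2 + 4 * x + 1))
      (Set.Ici 1) := by
    apply monotoneOn_of_deriv_nonneg (convex_Ici 1)
    · apply ContinuousOn.sub
      · exact Real.continuousOn_log.mono (fun x hx => by
          simp only [Set.mem_compl_iff, Set.mem_singleton_iff]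
          intro h; rw [h] at hx; exact absurd hx.out (by norm_num))
      · apply ContinuousOn.div (by fun_prop) (by fun_prop)
        intro x hx
        have : (1:ℝ) ≤ x := hx
        nlinarith
    · intro x hx
      rw [interior_Ici] at hx
      have hx1 : (1:ℝ) < x := hx
      have hx0 : (0:ℝ) < x := by linarith
      have hden : x ^ 2 + 4 * x + 1 ≠ 0 := by nlinarith
      have h1 : HasDerivAt (fun y : ℝ => Real.log y - 3 * (y ^ 2 - 1) / (y ^ 2 + 4 * y + 1))
          (x⁻¹ - (3 * (2 * x) * (x ^ 2 + 4 * x + 1) - 3 * (x ^ 2 - 1) * (2 * x + 4))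
            / (x ^ 2 + 4 * x + 1) ^ 2) x := by
        apply (Real.hasDerivAt_log hx0.ne').sub
        have hnum : HasDerivAt (fun y : ℝ => 3 * (y ^ 2 - 1)) (3 * (2 * x)) x := by
          simpa using (((hasDerivAt_pow 2 x).sub_const 1).const_mul 3)
        have hd : HasDerivAt (fun y : ℝ => y ^ 2 + 4 * y + 1) (2 * x + 4) x := by
          simpa using (((hasDerivAt_pow 2 x).add ((hasDerivAt_id x).const_mul 4)).add_const 1)
        exact hnum.div hd hden
      exact h1.differentiableAt.differentiableWithinAt
    · intro x hx
      rw [interior_Ici] at hx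
      have hx1 : (1:ℝ) < x := hx
      have hx0 : (0:ℝ) < x := by linarith
      have hden : x ^ 2 + 4 * x + 1 ≠ 0 := by nlinarith
      have h1 : HasDerivAt (fun y : ℝ => Real.log y - 3 * (y ^ 2 - 1) / (y ^ 2 + 4 * y + 1))
          (x⁻¹ - (3 * (2 * x) * (x ^ 2 + 4 * x + 1) - 3 * (x ^ 2 - 1) * (2 * x + 4))
            / (x ^ 2 + 4 * x + 1) ^ 2) x := by
        apply (Real.hasDerivAt_log hx0.ne').sub
        have hnum : HasDerivAt (fun y : ℝ => 3 * (y ^ 2 - 1)) (3 * (2 * x)) x := by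
          simpa using (((hasDerivAt_pow 2 x).sub_const 1).const_mul 3)
        have hd : HasDerivAt (fun y : ℝ => y ^ 2 + 4 * y + 1) (2 * x + 4) x := by
          simpa using (((hasDerivAt_pow 2 x).add ((hasDerivAt_id x).const_mul 4)).add_const 1)
        exact hnum.div hd hden
      rw [h1.deriv]
      rw [sub_nonneg, div_le_iff₀ (by positivity), inv_eq_one_div]
      rw [div_mul_eq_mul_div, le_div_iff₀ hx0]
      nlinarith [pow_le_pow_left₀ (by linarith : (0:ℝ) ≤ x - 1) (le_refl (x-1)) 4,
        sq_nonneg ((x-1)^2), sq_nonneg (x-1), sq_nonneg x]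
  have h0 : (fun x : ℝ => Real.log x - 3 * (x ^ 2 - 1) / (x ^ 2 + 4 * x + 1)) 1 ≤
      (fun x : ℝ => Real.log x - 3 * (x ^ 2 - 1) / (x ^ 2 + 4 * x + 1)) t :=
    hmono (Set.self_mem_Ici) ht ht
  simp only [Real.log_one] at h0
  norm_num at h0
  have hden : (0:ℝ) < t ^ 2 + 4 * t + 1 := by nlinarith
  rw [div_le_iff₀ hden] at h0
  linarith [h0]

/-- (B) for `1 ≤ s`: cleared form `(4s+2)·log s ≤ s²+4s−5`. -/
lemma logB {s : ℝ} (hs : 1 ≤ s) :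
    (4 * s + 2) * Real.log s ≤ s ^ 2 + 4 * s - 5 := by
  have hmono : MonotoneOn (fun x : ℝ => (x ^ 2 + 4 * x - 5) / (4 * x + 2) - Real.log x)
      (Set.Ici 1) := by
    apply monotoneOn_of_deriv_nonneg (convex_Ici 1)
    · apply ContinuousOn.sub
      · apply ContinuousOn.div (by fun_prop) (by fun_prop)
        intro x hx
        have : (1:ℝ) ≤ x := hx
        nlinarith
      · exact Real.continuousOn_log.mono (fun x hx => by
          simp only [Set.mem_compl_iff, Set.mem_singleton_iff]
          intro h; rw [h] at hx; exact absurd hx.out (by norm_num))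
    · intro x hx
      rw [interior_Ici] at hx
      have hx1 : (1:ℝ) < x := hx
      have hx0 : (0:ℝ) < x := by linarith
      have hden : 4 * x + 2 ≠ 0 := by nlinarith
      have hnum : HasDerivAt (fun y : ℝ => y ^ 2 + 4 * y - 5) (2 * x + 4) x := by
        simpa using (((hasDerivAt_pow 2 x).add ((hasDerivAt_id x).const_mul 4)).sub_const 5)
      have hd : HasDerivAt (fun y : ℝ => 4 * y + 2) 4 x := by
        simpa using (((hasDerivAt_id x).const_mul 4).add_const 2)
      exact ((hnum.div hd hden).sub (Real.hasDerivAt_log hx0.ne')).differentiableAt.differentiableWithinAt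
    · intro x hx
      rw [interior_Ici] at hx
      have hx1 : (1:ℝ) < x := hx
      have hx0 : (0:ℝ) < x := by linarith
      have hden : 4 * x + 2 ≠ 0 := by nlinarith
      have hnum : HasDerivAt (fun y : ℝ => y ^ 2 + 4 * y - 5) (2 * x + 4) x := by
        simpa using (((hasDerivAt_pow 2 x).add ((hasDerivAt_id x).const_mul 4)).sub_const 5)
      have hd : HasDerivAt (fun y : ℝ => 4 * y + 2) 4 x := by
        simpa using (((hasDerivAt_id x).const_mul 4).add_const 2)
      have h1 : HasDerivAt (fun y : ℝ => (y ^ 2 + 4 * y - 5) / (4 * y + 2) - Real.log y)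
          (((2 * x + 4) * (4 * x + 2) - (x ^ 2 + 4 * x - 5) * 4) / (4 * x + 2) ^ 2 - x⁻¹) x :=
        (hnum.div hd hden).sub (Real.hasDerivAt_log hx0.ne')
      rw [h1.deriv]
      rw [sub_nonneg, inv_eq_one_div, div_le_div_iff₀ hx0 (by positivity)]
      nlinarith [mul_nonneg (mul_nonneg (by linarith : (0:ℝ) ≤ x - 1)
        (by linarith : (0:ℝ) ≤ x - 1)) (by linarith : (0:ℝ) ≤ x - 1)]
  have h0 := hmono (Set.self_mem_Ici) hs hs
  simp only [Real.log_one] at h0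
  norm_num at h0
  have hden : (0:ℝ) < 4 * s + 2 := by linarith
  rw [le_div_iff₀ hden] at h0
  linarith

/-- Key scalar inequality: `3(t−1)² ≤ (2t+4)(t log t − t + 1)` for `t ≥ 0`. -/
lemma entropy_pt {t : ℝ} (ht : 0 ≤ t) :
    3 * (t - 1) ^ 2 ≤ (2 * t + 4) * (t * Real.log t - t + 1) := by
  rcases eq_or_lt_of_le ht with h0 | h0
  · rw [← h0]; norm_num
  rcases le_total t 1 with h1 | h1
  · -- use logB with s = 1/t
    have hs : (1:ℝ) ≤ 1 / t := by rw [le_div_iff₀ h0]; linarith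
    have hB := logB hs
    rw [Real.log_div one_ne_zero h0.ne', Real.log_one] at hB
    -- hB : (4*(1/t)+2)*(0 - log t) ≤ (1/t)^2 + 4*(1/t) - 5
    have ht2 : (0:ℝ) < t ^ 2 := by positivity
    have hB' : (4 * t + 2 * t ^ 2) * (- Real.log t) ≤ 1 + 4 * t - 5 * t ^ 2 := by
      have := mul_le_mul_of_nonneg_left hB ht2.le
      calc (4 * t + 2 * t ^ 2) * (- Real.log t)
          = t ^ 2 * ((4 * (1 / t) + 2) * (0 - Real.log t)) := by
            field_simp; ring
        _ ≤ t ^ 2 * ((1 / t) ^ 2 + 4 * (1 / t) - 5) := this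
        _ = 1 + 4 * t - 5 * t ^ 2 := by field_simp
    nlinarith [hB']
  · -- use logA
    have hA := logA h1
    have hpos : (0:ℝ) < t ^ 2 + 4 * t + 1 := by nlinarith
    have key : (t ^ 2 + 4 * t + 1) * (3 * (t - 1) ^ 2) ≤
        (t ^ 2 + 4 * t + 1) * ((2 * t + 4) * (t * Real.log t - t + 1)) := by
      have hm : (2 * t + 4) * t * (3 * (t ^ 2 - 1)) ≤
          (2 * t + 4) * t * ((t ^ 2 + 4 * t + 1) * Real.log t) :=
        mul_le_mul_of_nonneg_left hA (by nlinarith)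
      nlinarith [hm, pow_le_pow_left₀ (by linarith : (0:ℝ) ≤ t - 1) (le_refl (t-1)) 4,
        sq_nonneg (t-1), sq_nonneg ((t-1)^2)]
    exact le_of_mul_le_mul_left key hpos

/-- Pointwise inequality `(a−b)² ≤ (2a/3 + 4b/3)·k(a,b)`. -/
lemma pointwise_sq {a b : ℝ} (ha : 0 ≤ a) (hb : 0 ≤ b) (hab : b = 0 → a = 0) :
    (a - b) ^ 2 ≤ (2 / 3 * a + 4 / 3 * b) * (a * Real.log (a / b) - a + b) := by
  rcases eq_or_lt_of_le hb with h0 | h0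
  · rw [hab h0.symm, ← h0]; norm_num
  · set t := a / b with htdef
    have ht0 : 0 ≤ t := div_nonneg ha h0.le
    have ha' : a = t * b := (div_mul_cancel₀ a h0.ne').symm
    have hL := entropy_pt ht0
    rw [ha']
    have hb2 : (0:ℝ) ≤ b ^ 2 := sq_nonneg b
    nlinarith [mul_le_mul_of_nonneg_left hL hb2]

/-- The KL integrand is nonnegative. -/
lemma pointwise_nonneg {a b : ℝ} (ha : 0 ≤ a) (hb : 0 ≤ b) (hab : b = 0 → a = 0) :
    0 ≤ a * Real.log (a / b) - a + b := by
  rcases eq_or_lt_of_le hb with h0 | h0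
  · rw [hab h0.symm, ← h0]; norm_num
  · set t := a / b with htdef
    have ht0 : 0 ≤ t := div_nonneg ha h0.le
    have ha' : a = t * b := (div_mul_cancel₀ a h0.ne').symm
    have hL := entropy_pt ht0
    rw [ha']
    nlinarith [mul_le_mul_of_nonneg_left hL h0.le, sq_nonneg (t-1)]

/-- generalised Pinsker-type inequality
`‖φ−ψ‖²_{L¹} ≤ ((2/3)‖φ‖_{L¹} + (4/3)‖ψ‖_{L¹}) D_KL(φ,ψ)` for nonnegative `φ, ψ ∈ L¹`. -/
theorem KLdiv_controls_L1_sq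
    {X : Type*} [MeasurableSpace X] (μ : Measure X) (φ ψ : X → ℝ)
    (hφ : Integrable φ μ) (hψ : Integrable ψ μ)
    (hφ0 : ∀ᵐ x ∂μ, 0 ≤ φ x) (hψ0 : ∀ᵐ x ∂μ, 0 ≤ ψ x)
    (habs : ∀ᵐ x ∂μ, ψ x = 0 → φ x = 0)
    (hint : Integrable (fun x => φ x * Real.log (φ x / ψ x) - φ x + ψ x) μ) :
    (∫ x, |φ x - ψ x| ∂μ) ^ 2 ≤
      (2 / 3 * ∫ x, |φ x| ∂μ + 4 / 3 * ∫ x, |ψ x| ∂μ) * KLdiv μ φ ψ := by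
  set k : X → ℝ := fun x => φ x * Real.log (φ x / ψ x) - φ x + ψ x with hk
  set c : X → ℝ := fun x => 2 / 3 * φ x + 4 / 3 * ψ x with hcdef
  have hc_int : Integrable c μ := (hφ.const_mul (2/3)).add (hψ.const_mul (4/3))
  set I : ℝ := ∫ x, |φ x - ψ x| ∂μ with hIdef
  set K : ℝ := KLdiv μ φ ψ with hKdef
  set C : ℝ := ∫ x, c x ∂μ with hCdef
  -- a.e. pointwise facts
  have hae : ∀ᵐ x ∂μ, (φ x - ψ x) ^ 2 ≤ c x * k x ∧ 0 ≤ k x := by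
    filter_upwards [hφ0, hψ0, habs] with x h1 h2 h3
    exact ⟨pointwise_sq h1 h2 h3, pointwise_nonneg h1 h2 h3⟩
  have hI0 : 0 ≤ I := integral_nonneg fun x => abs_nonneg _
  have hK0 : 0 ≤ K := integral_nonneg_of_ae (hae.mono fun x hx => hx.2)
  have hC0 : 0 ≤ C := integral_nonneg_of_ae <| by
    filter_upwards [hφ0, hψ0] with x h1 h2; simp only [hcdef]; positivity
  -- key inequality for every λ > 0
  have hstep : ∀ lam : ℝ, 0 < lam → 2 * lam * I ≤ lam ^ 2 * C + K := by
    intro lam hlam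
    have hptwise : ∀ᵐ x ∂μ, 2 * lam * |φ x - ψ x| ≤ lam ^ 2 * c x + k x := by
      filter_upwards [hae, hφ0, hψ0] with x ⟨h1, h2⟩ h3 h4
      have hcx : 0 ≤ c x := by simp only [hcdef]; positivity
      have hsq : (2 * lam * |φ x - ψ x|) ^ 2 ≤ (lam ^ 2 * c x + k x) ^ 2 := by
        have : |φ x - ψ x| ^ 2 = (φ x - ψ x) ^ 2 := sq_abs _
        nlinarith [sq_nonneg (lam ^ 2 * c x - k x), sq_nonneg lam,
          mul_le_mul_of_nonneg_left h1 (sq_nonneg lam)]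
      have h5 : 0 ≤ 2 * lam * |φ x - ψ x| := by positivity
      have h6 : 0 ≤ lam ^ 2 * c x + k x := by positivity
      calc 2 * lam * |φ x - ψ x|
          = Real.sqrt ((2 * lam * |φ x - ψ x|) ^ 2) := (Real.sqrt_sq h5).symm
        _ ≤ Real.sqrt ((lam ^ 2 * c x + k x) ^ 2) := Real.sqrt_le_sqrt hsq
        _ = lam ^ 2 * c x + k x := Real.sqrt_sq h6
    have hmono := integral_mono_ae (((hφ.sub hψ).abs).const_mul (2 * lam))
      ((hc_int.const_mul (lam ^ 2)).add hint) hptwise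
    simp only [Pi.add_apply, Pi.sub_apply] at hmono
    rw [integral_add (hc_int.const_mul (lam ^ 2)) hint] at hmono
    simp only [integral_const_mul] at hmono
    have hKk : K = ∫ x, k x ∂μ := rfl
    rw [hKk, hIdef, hCdef]
    exact hmono
  -- quadratic nonnegativity ⇒ discriminant ≤ 0
  have hquad : ∀ x : ℝ, 0 ≤ C * (x * x) + (-(2 * I)) * x + K := by
    intro x
    rcases le_or_gt x 0 with hx | hx
    · nlinarith [mul_nonneg hC0 (mul_self_nonneg x), mul_nonneg hI0 (neg_nonneg.2 hx)]
    · have := hstep x hx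
      nlinarith
  have hdis := discrim_le_zero hquad
  rw [discrim] at hdis
  -- conclude I^2 ≤ C * K, then rewrite C
  have hfin : I ^ 2 ≤ C * K := by nlinarith
  have hCeq : C = 2 / 3 * ∫ x, |φ x| ∂μ + 4 / 3 * ∫ x, |ψ x| ∂μ := by
    have e1 : ∫ x, |φ x| ∂μ = ∫ x, φ x ∂μ :=
      integral_congr_ae (hφ0.mono fun x hx => abs_of_nonneg hx)
    have e2 : ∫ x, |ψ x| ∂μ = ∫ x, ψ x ∂μ :=
      integral_congr_ae (hψ0.mono fun x hx => abs_of_nonneg hx)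
    rw [hCdef, e1, e2, hcdef]
    rw [integral_add (hφ.const_mul (2/3)) (hψ.const_mul (4/3)),
      integral_const_mul _ _, integral_const_mul _ _]
  rw [← hCeq]
  exact hfin
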